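/- arXiv:0712.1957 — 8 statements merged into one kernel-verified Lean document; each statement's English description precedes it below -/
import Mathlib

section
/- Let R be a commutative ring with identity. If −1 can be written as a sum of two squares in R, then every element of R which can be written as a (finite) sum of squares in R can be written as a sum of three squares in R. -/
theorem stmt3 (R : Type*) [CommRing R]
    (h : ∃ x y : R, x ^ 2 + y ^ 2 = -1)
    (a : R) (ha : IsSumSq a) :
    ∃ x y z : R, x ^ 2 + y ^ 2 + z ^ 2 = a := by
  obtain ⟨x, y, hxy⟩ := h
  -- Key: every sum of squares a can be written as a = 2k + 1 - v²
  have key : ∃ k v : R, a = 2 * k + 1 - v ^ 2 := by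
    induction ha with
    | zero => exact ⟨0, 1, by ring⟩
    | sq_add t _ ih =>
        obtain ⟨k, v, hk⟩ := ih
        exact ⟨k + v * t + t * t, v + t, by rw [hk]; ring⟩
  obtain ⟨k, v, hk⟩ := key
  refine ⟨k + 1, x * k + y * v, y * k - x * v, ?_⟩
  have : (x * k + y * v) ^ 2 + (y * k - x * v) ^ 2
      = (x ^ 2 + y ^ 2) * (k ^ 2 + v ^ 2) := by ring
  rw [hk]
  linear_combination (k ^ 2 + v ^ 2) * hxy
end

section
/- Let p be an odd prime such that the multiplicative order of 2 modulo p is even (equivalently, there exists t ≥ 1 with 2^t ≡ −1 (mod p)). Let K = ℚ(ζ_p) be the p-th cyclotomic field with ring of integers O_K. Then −1 is a sum of two squares in O_K: there exist a, b ∈ O_K with a² + b² = −1. -/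
open scoped NumberField

/-- Recursion producing a sum of two squares equal to `∏ (1 + (c j)^2)`. -/
lemma aux_two_sq_prod {R : Type*} [CommRing R] (c : ℕ → R) (t : ℕ) :
    ∃ a b : R, a ^ 2 + b ^ 2 = ∏ j ∈ Finset.range t, (1 + (c j) ^ 2) := by
  induction t with
  | zero => exact ⟨1, 0, by simp⟩
  | succ t ih =>
      obtain ⟨a, b, h⟩ := ih
      refine ⟨a - b * c t, b + a * c t, ?_⟩
      rw [Finset.prod_range_succ, ← h]; ring

/-- Telescoping identity. -/
lemma aux_geom {R : Type*} [CommRing R] (x : R) (t : ℕ) :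
    (x - 1) * ∏ j ∈ Finset.range t, (1 + x ^ (2 ^ j)) = x ^ (2 ^ t) - 1 := by
  induction t with
  | zero => simp
  | succ t ih =>
      rw [Finset.prod_range_succ, ← mul_assoc, ih, pow_succ, pow_mul]
      ring

theorem stmt5 (p : ℕ+) (hp : (p : ℕ).Prime) (hodd : (p : ℕ) ≠ 2)
    (hord : Even (orderOf (2 : ZMod p)))
    (K : Type*) [Field K] [NumberField K] [IsCyclotomicExtension {(p : ℕ)} ℚ K] :
    ∃ a b : 𝓞 K, a ^ 2 + b ^ 2 = -1 := by
  haveI := Fact.mk hp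
  -- Step 1: find r > 0 with 2^r ≡ -1 mod p
  have h2ne : (2 : ZMod p) ≠ 0 := by
    intro h
    have h2 : ((2 : ℕ) : ZMod p) = 0 := by push_cast; exact h
    have hdvd : (p : ℕ) ∣ 2 := (ZMod.natCast_eq_zero_iff 2 p).mp h2
    exact hodd ((Nat.prime_dvd_prime_iff_eq hp Nat.prime_two).mp hdvd)
  have hfin : IsOfFinOrder (2 : ZMod p) :=
    isOfFinOrder_iff_pow_eq_one.mpr ⟨(p : ℕ) - 1, by
      have := hp.two_le; omega, ZMod.pow_card_sub_one_eq_one h2ne⟩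
  have hpos := hfin.orderOf_pos
  obtain ⟨r, hr⟩ := hord
  have hrpos : 0 < r := by omega
  have hsq : ((2 : ZMod p) ^ r) ^ 2 = 1 := by
    rw [← pow_mul, show r * 2 = r + r by ring, ← hr, pow_orderOf_eq_one]
  have hne1 : (2 : ZMod p) ^ r ≠ 1 :=
    pow_ne_one_of_lt_orderOf (by omega) (by omega)
  have hneg : (2 : ZMod p) ^ r = -1 := by
    have h0 : ((2 : ZMod p) ^ r - 1) * ((2 : ZMod p) ^ r + 1) = 0 := by
      linear_combination hsq
    rcases mul_eq_zero.mp h0 with h | h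
    · exact absurd (by linear_combination h) hne1
    · linear_combination h
  -- natural number congruence
  have hmodeq : 2 ^ r ≡ (p : ℕ) - 1 [MOD (p : ℕ)] := by
    rw [← ZMod.natCast_eq_natCast_iff]
    have e1 : (((p : ℕ) - 1 : ℕ) : ZMod p) = -1 := by
      rw [Nat.cast_sub hp.one_le, ZMod.natCast_self]; push_cast; ring
    rw [e1]
    push_cast
    exact hneg
  have hkey : 2 ^ r % (p : ℕ) = (p : ℕ) - 1 := by
    have h1 : ((p : ℕ) - 1) % (p : ℕ) = (p : ℕ) - 1 :=
      Nat.mod_eq_of_lt (by have := hp.two_le; omega)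
    unfold Nat.ModEq at hmodeq
    rw [h1] at hmodeq; exact hmodeq
  -- Step 2: the primitive root in 𝓞 K
  have hζ := IsCyclotomicExtension.zeta_spec p ℚ K
  set ζ : K := IsCyclotomicExtension.zeta p ℚ K with hζdef
  let η : 𝓞 K := ⟨ζ, NumberField.RingOfIntegers.isIntegral_coe ⟨ζ, hζ.isIntegral p.pos⟩⟩
  have hηp : η ^ (p : ℕ) = 1 := by
    ext
    push_cast
    exact hζ.pow_eq_one
  have hη2 : η ^ 2 ≠ 1 := by
    intro h
    have : ζ ^ 2 = 1 := by
      have := congrArg (algebraMap (𝓞 K) K) h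
      push_cast at this
      exact this
    exact hζ.pow_ne_one_of_pos_of_lt (by norm_num) (by have := hp.two_le; omega) this
  have hmod : ∀ m : ℕ, η ^ m = η ^ (m % (p : ℕ)) := by
    intro m
    conv_lhs => rw [← Nat.div_add_mod m (p : ℕ)]
    rw [pow_add, pow_mul, hηp, one_pow, one_mul]
  -- the unit u = η^(p-1), inverse of η
  set u : 𝓞 K := η ^ ((p : ℕ) - 1) with hu_def
  have hu : u * η = 1 := by
    rw [hu_def, ← pow_succ, Nat.sub_add_cancel hp.one_le, hηp]
  have h2r : η ^ (2 ^ r) = u := by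
    rw [hmod, hkey]
  -- the product
  set P : 𝓞 K := ∏ j ∈ Finset.range r, (1 + (η ^ 2) ^ (2 ^ j)) with hP_def
  have hgeom : (η ^ 2 - 1) * P = u ^ 2 - 1 := by
    rw [hP_def, aux_geom]
    congr 1
    rw [← pow_mul, mul_comm, pow_mul, h2r]
  have h0 : (η ^ 2 - 1) * (P + u ^ 2) = 0 := by
    linear_combination hgeom + (u * η + 1) * hu
  have hP : P = -u ^ 2 := by
    rcases mul_eq_zero.mp h0 with h | h
    · exact absurd (by linear_combination h) hη2
    · linear_combination h
  -- sum of two squares equal to P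
  obtain ⟨a, b, hab⟩ := aux_two_sq_prod (fun j => η ^ (2 ^ j)) r
  have hab' : a ^ 2 + b ^ 2 = P := by
    rw [hab, hP_def]
    refine Finset.prod_congr rfl fun j _ => ?_
    rw [← pow_mul, ← pow_mul, mul_comm]
  refine ⟨η * a, η * b, ?_⟩
  have habP : a ^ 2 + b ^ 2 = -u ^ 2 := hab'.trans hP
  linear_combination η ^ 2 * habP - (u * η + 1) * hu
end

section
/- Let R be an integral domain, p an odd prime, and ζ ∈ R a primitive p-th root of unity. Let t ≥ 1 be an integer with 2^t ≡ −1 (mod p). Then ζ² · ∏_{i=1}^{t} (1 + ζ^{2^i}) = −1. -/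
open Finset

theorem stmt6 (R : Type*) [CommRing R] [IsDomain R]
    (p : ℕ) (hp : p.Prime) (hodd : p ≠ 2)
    (ζ : R) (hζ : IsPrimitiveRoot ζ p)
    (t : ℕ) (ht : 1 ≤ t) (h2t : (2 : ZMod p) ^ t = -1) :
    ζ ^ 2 * ∏ i ∈ Finset.Icc 1 t, (1 + ζ ^ (2 ^ i)) = -1 := by
  have hpos : 0 < p := hp.pos
  haveI : NeZero p := ⟨hp.ne_zero⟩
  -- telescoping identity
  have tel : ∀ n : ℕ, (1 - ζ ^ 2) * ∏ i ∈ Finset.Icc 1 n, (1 + ζ ^ (2 ^ i))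
      = 1 - ζ ^ (2 ^ (n + 1)) := by
    intro n
    induction n with
    | zero => simp
    | succ n ih =>
      rw [Finset.prod_Icc_succ_top (by omega), ← mul_assoc, ih]
      have : ζ ^ 2 ^ (n + 2) = (ζ ^ 2 ^ (n + 1)) ^ 2 := by
        rw [← pow_mul]; ring_nf
      rw [this]; ring
  -- ζ ^ (2^(t+1) + 2) = 1
  have hdvd : p ∣ 2 ^ (t + 1) + 2 := by
    have : ((2 ^ (t + 1) + 2 : ℕ) : ZMod p) = 0 := by
      push_cast
      rw [pow_succ, h2t]; ring
    exact (ZMod.natCast_eq_zero_iff _ _).mp this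
  have hone : ζ ^ (2 ^ (t + 1) + 2) = 1 := by
    obtain ⟨k, hk⟩ := hdvd
    rw [hk, pow_mul, hζ.pow_eq_one, one_pow]
  have hne : (1 : R) - ζ ^ 2 ≠ 0 := by
    intro h
    have h2 : ζ ^ 2 = 1 := by linear_combination -h
    have := (hζ.pow_eq_one_iff_dvd 2).mp h2
    exact hodd ((Nat.prime_dvd_prime_iff_eq hp Nat.prime_two).mp this)
  apply mul_left_cancel₀ hne
  calc (1 - ζ ^ 2) * (ζ ^ 2 * ∏ i ∈ Finset.Icc 1 t, (1 + ζ ^ (2 ^ i)))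
      = ζ ^ 2 * ((1 - ζ ^ 2) * ∏ i ∈ Finset.Icc 1 t, (1 + ζ ^ (2 ^ i))) := by ring
    _ = ζ ^ 2 * (1 - ζ ^ (2 ^ (t + 1))) := by rw [tel]
    _ = ζ ^ 2 - ζ ^ (2 ^ (t + 1) + 2) := by rw [pow_add]; ring
    _ = (1 - ζ ^ 2) * (-1) := by rw [hone]; ring
end

section
/- Let n, m, k be positive integers. The equation m²x² + n^{2k}y² − nz² = 1 has a solution with x, y, z in the p-adic integers ℤ_p for every prime p if and only if gcd(n, m) = 1. -/
lemma padic_nat_unit {p : ℕ} [Fact p.Prime] {n : ℕ} (h : ¬ p ∣ n) :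
    IsUnit (n : ℤ_[p]) := by
  rw [PadicInt.isUnit_iff]
  have h1 : ‖((n : ℤ) : ℤ_[p])‖ < 1 ↔ (p : ℤ) ∣ (n : ℤ) := PadicInt.norm_int_lt_one_iff_dvd n
  have h2 : ¬ (p : ℤ) ∣ (n : ℤ) := by exact_mod_cast h
  have := PadicInt.norm_le_one ((n : ℤ) : ℤ_[p])
  push_cast at h1 this ⊢
  rcases lt_or_eq_of_le this with hlt | he
  · exact absurd (h1.mp hlt) h2
  · exact he

theorem stmt9 (n m k : ℕ) (hn : 0 < n) (hm : 0 < m) (hk : 0 < k) :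
    (∀ (p : ℕ) [Fact p.Prime],
        ∃ x y z : ℤ_[p],
          (m : ℤ_[p]) ^ 2 * x ^ 2 + (n : ℤ_[p]) ^ (2 * k) * y ^ 2 - (n : ℤ_[p]) * z ^ 2 = 1) ↔
      Nat.gcd n m = 1 := by
  constructor
  · intro h
    by_contra hg
    obtain ⟨p, hp, hpd⟩ := Nat.exists_prime_and_dvd hg
    haveI : Fact p.Prime := ⟨hp⟩
    have hpn : p ∣ n := hpd.trans (Nat.gcd_dvd_left n m)
    have hpm : p ∣ m := hpd.trans (Nat.gcd_dvd_right n m)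
    obtain ⟨x, y, z, hxyz⟩ := h p
    have := congrArg (PadicInt.toZMod (p := p)) hxyz
    have hn0 : (n : ZMod p) = 0 := (ZMod.natCast_eq_zero_iff n p).mpr hpn
    have hm0 : (m : ZMod p) = 0 := (ZMod.natCast_eq_zero_iff m p).mpr hpm
    simp only [map_sub, map_add, map_mul, map_pow, map_one, map_natCast, hn0, hm0] at this
    rw [zero_pow (Nat.mul_ne_zero two_ne_zero hk.ne')] at this
    simp at this
  · intro hg p hp
    by_cases hpm : p ∣ m
    · have hpn : ¬ p ∣ n := fun hpn =>
        hp.out.one_lt.ne' (Nat.dvd_one.mp (hg ▸ Nat.dvd_gcd hpn hpm))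
      have hu : IsUnit ((n : ℤ_[p]) ^ k) := (padic_nat_unit hpn).pow k
      obtain ⟨u, hu⟩ := hu
      refine ⟨0, (↑u⁻¹ : ℤ_[p]), 0, ?_⟩
      have : (n : ℤ_[p]) ^ (2 * k) = ((n : ℤ_[p]) ^ k) ^ 2 := by ring
      have h2 : (↑u : ℤ_[p]) ^ 2 * (↑u⁻¹ : ℤ_[p]) ^ 2 = 1 := by
        rw [← mul_pow, u.mul_inv, one_pow]
      rw [this, ← hu, h2]
      simp
    · have hu : IsUnit (m : ℤ_[p]) := padic_nat_unit hpm
      obtain ⟨u, hu⟩ := hu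
      refine ⟨(↑u⁻¹ : ℤ_[p]), 0, 0, ?_⟩
      rw [← hu, ← mul_pow]
      simp
end

section
/- Let m be an integer with m ≡ 3 (mod 8) or m ≡ 5 (mod 8) (i.e. m ≡ ±3 (mod 8)). Then: (1) for every prime p there exist x, y, z ∈ ℤ_p, not all divisible by p, with x² − 2y² + 64z² = m²; but (2) there do not exist integers x, y, z with gcd(x, y, z) = 1 and x² − 2y² + 64z² = m². -/
open Polynomial

private lemma norm_int_one' {p : ℕ} [hp : Fact p.Prime] (k : ℤ) (h : ¬ ((p:ℤ) ∣ k)) :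
    ‖(k : ℤ_[p])‖ = 1 := by
  have h1 := (PadicInt.norm_int_lt_one_iff_dvd (p := p) k).not.mpr h
  have h2 := PadicInt.norm_le_one ((k : ℤ) : ℤ_[p])
  push_cast at h1 h2 ⊢
  rcases lt_or_eq_of_le h2 with h | h
  · exact absurd h h1
  · exact h

private lemma two_norm_one' {p : ℕ} [hp : Fact p.Prime] (hp2 : p ≠ 2) : ‖(2 : ℤ_[p])‖ = 1 := by
  have : ¬ ((p : ℤ) ∣ 2) := by
    rw [show ((2:ℤ)) = ((2:ℕ):ℤ) by norm_num, Int.natCast_dvd_natCast]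
    intro h
    exact hp2 ((Nat.prime_dvd_prime_iff_eq hp.out Nat.prime_two).mp h)
  have := norm_int_one' 2 this
  push_cast at this
  exact this

private lemma padic_sqrt' {p : ℕ} [Fact p.Prime] (hp : p ≠ 2) (c : ℤ_[p]) (hc : ‖c - 1‖ < 1) :
    ∃ x : ℤ_[p], x ^ 2 = c ∧ ‖x‖ = 1 := by
  have h2 : ‖(2 : ℤ_[p])‖ = 1 := two_norm_one' hp
  set F : Polynomial ℤ_[p] := X ^ 2 - C c with hF
  have hder : F.derivative = C 2 * X := by
    rw [hF]; simp [derivative_X_pow]; rw [one_add_one_eq_two]; exact (map_ofNat C 2).symm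
  have heval1 : F.eval 1 = 1 - c := by simp [hF]
  have hder1 : ‖F.derivative.eval 1‖ = 1 := by
    rw [hder]; simp [h2]
  have hnorm : ‖F.eval 1‖ < ‖F.derivative.eval 1‖ ^ 2 := by
    rw [heval1, hder1, norm_sub_rev]; simpa using hc
  obtain ⟨z, hz, hdist, -, -⟩ := hensels_lemma hnorm
  refine ⟨z, ?_, ?_⟩
  · have : z ^ 2 - c = 0 := by simpa [hF] using hz
    exact sub_eq_zero.mp this
  · rw [Polynomial.coe_aeval_eq_eval, hder1] at hdist
    have : z = 1 + (z - 1) := by ring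
    rw [this, PadicInt.norm_add_eq_max_of_ne]
    · rw [norm_one]; exact max_eq_left (le_of_lt hdist)
    · rw [norm_one]; intro h; rw [← h] at hdist; exact lt_irrefl _ hdist

private lemma local_odd' (m : ℤ) {p : ℕ} [hp : Fact p.Prime] (hp2 : p ≠ 2) :
    ∃ x y z : ℤ_[p], x ^ 2 - 2 * y ^ 2 + 64 * z ^ 2 = (m : ℤ_[p]) ^ 2 ∧ ‖x‖ = 1 := by
  have hpodd : p % 2 = 1 := Nat.odd_iff.mp (hp.out.odd_of_ne_two hp2)
  have h2ne : (2 : ZMod p) ≠ 0 := by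
    have : ¬ (p ∣ 2) := fun h => hp2 ((Nat.prime_dvd_prime_iff_eq hp.out Nat.prime_two).mp h)
    rw [show (2:ZMod p) = ((2:ℕ):ZMod p) by push_cast; ring, Ne,
      ZMod.natCast_eq_zero_iff]
    exact this
  have h64ne : (-64 : ZMod p) ≠ 0 := by
    have : ¬ (p ∣ 64) := by
      intro h
      have h6 : p ∣ 2 ^ 6 := by rw [show (2 ^ 6 : ℕ) = 64 by norm_num]; exact h
      have := hp.out.dvd_of_dvd_pow h6
      exact hp2 ((Nat.prime_dvd_prime_iff_eq hp.out Nat.prime_two).mp this)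
    rw [neg_ne_zero, show (64:ZMod p) = ((64:ℕ):ZMod p) by push_cast; ring, Ne,
      ZMod.natCast_eq_zero_iff]
    exact this
  have hcard : Fintype.card (ZMod p) % 2 = 1 := by rw [ZMod.card]; exact hpodd
  obtain ⟨a, b, hab⟩ := FiniteField.exists_root_sum_quadratic
    (f := C (2 : ZMod p) * X ^ 2 + C 0 * X + C ((m : ZMod p) ^ 2 - 1))
    (g := C (-64 : ZMod p) * X ^ 2 + C 0 * X + C 0)
    (degree_quadratic h2ne) (degree_quadratic h64ne) hcard
  simp only [eval_add, eval_mul, eval_pow, eval_C, eval_X] at hab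
  set ya : ℤ := (a.val : ℤ) with hya
  set zb : ℤ := (b.val : ℤ) with hzb
  set K : ℤ := m ^ 2 + 2 * ya ^ 2 - 64 * zb ^ 2 - 1 with hK
  have hKzero : ((K : ZMod p)) = 0 := by
    push_cast [hK, hya, hzb, ZMod.natCast_val, ZMod.cast_id]
    linear_combination hab
  have hdvd : (p : ℤ) ∣ K := (ZMod.intCast_zmod_eq_zero_iff_dvd K p).mp hKzero
  have hnorm : ‖((K : ℤ_[p]) + 1) - 1‖ < 1 := by
    simpa using (PadicInt.norm_int_lt_one_iff_dvd K).mpr hdvd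
  obtain ⟨x, hx2, hx1⟩ := padic_sqrt' hp2 ((K : ℤ_[p]) + 1) hnorm
  refine ⟨x, (ya : ℤ_[p]), (zb : ℤ_[p]), ?_, hx1⟩
  rw [hx2]
  push_cast [hK]
  ring

private lemma dvd_both' {q : ℕ} (hq : q.Prime) (hq2 : ¬ IsSquare (2 : ZMod q))
    {x y : ℤ} (h : (q:ℤ) ∣ x ^ 2 - 2 * y ^ 2) : (q:ℤ) ∣ x ∧ (q:ℤ) ∣ y := by
  haveI : Fact q.Prime := ⟨hq⟩
  have h0 : ((x:ZMod q)) ^ 2 = 2 * ((y:ZMod q)) ^ 2 := by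
    have := (ZMod.intCast_zmod_eq_zero_iff_dvd (x ^ 2 - 2 * y ^ 2) q).mpr h
    push_cast at this
    linear_combination this
  have hy : (y : ZMod q) = 0 := by
    by_contra hy
    apply hq2
    refine ⟨(x : ZMod q) * ((y : ZMod q))⁻¹, ?_⟩
    field_simp
    linear_combination -h0
  have hx : (x : ZMod q) = 0 := by
    rw [hy] at h0
    have : ((x:ZMod q)) ^ 2 = 0 := by rw [h0]; ring
    exact pow_eq_zero_iff (by norm_num) |>.mp this
  exact ⟨(ZMod.intCast_zmod_eq_zero_iff_dvd x q).mp hx,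
    (ZMod.intCast_zmod_eq_zero_iff_dvd y q).mp hy⟩

private lemma even_mult' {q : ℕ} (hq : q.Prime) (hq2 : ¬ IsSquare (2 : ZMod q)) :
    ∀ n : ℕ, ∀ x y : ℤ, (x ^ 2 - 2 * y ^ 2).natAbs = n → n ≠ 0 →
      Even (n.factorization q) := by
  intro n
  induction n using Nat.strong_induction_on with
  | _ n ih =>
    intro x y hxy hn
    by_cases hdvd : q ∣ n
    · have hdq : (q:ℤ) ∣ x ^ 2 - 2 * y ^ 2 := by
        rw [Int.natCast_dvd]
        rwa [hxy]
      obtain ⟨hx, hy⟩ := dvd_both' hq hq2 hdq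
      obtain ⟨x', rfl⟩ := hx
      obtain ⟨y', rfl⟩ := hy
      have key : ((q:ℤ) * x') ^ 2 - 2 * ((q:ℤ) * y') ^ 2 = (q:ℤ)^2 * (x' ^ 2 - 2 * y' ^ 2) := by
        ring
      set n' : ℕ := (x' ^ 2 - 2 * y' ^ 2).natAbs with hn'
      have hnn : n = q ^ 2 * n' := by
        rw [← hxy, key, Int.natAbs_mul, Int.natAbs_pow]
        simp [hn']
      have hn'0 : n' ≠ 0 := by
        intro h0
        rw [h0, mul_zero] at hnn
        exact hn hnn
      have hlt : n' < n := by
        rw [hnn]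
        have h1 : 1 < q ^ 2 := by nlinarith [hq.two_le]
        nlinarith [Nat.pos_of_ne_zero hn'0]
      have heq : n.factorization q = 2 + n'.factorization q := by
        rw [hnn, Nat.factorization_mul (pow_ne_zero 2 hq.ne_zero) hn'0]
        simp [Nat.Prime.factorization_pow, hq.factorization]
      rw [heq]
      obtain ⟨k, hk⟩ := ih n' hlt x' y' rfl hn'0
      exact ⟨k + 1, by omega⟩
    · rw [Nat.factorization_eq_zero_of_not_dvd hdvd]
      exact Even.zero

private lemma mod8_of_even_mults' :
    ∀ N : ℕ, N % 2 = 1 →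
      (∀ q : ℕ, q.Prime → q % 8 = 3 ∨ q % 8 = 5 → Even (N.factorization q)) →
      N % 8 = 1 ∨ N % 8 = 7 := by
  intro N
  induction N using Nat.strong_induction_on with
  | _ N ih =>
    intro hodd hall
    have hN0 : N ≠ 0 := by omega
    by_cases hN1 : N = 1
    · left; omega
    · have hgt : 1 < N := by omega
      set q := N.minFac with hq
      have hqp : q.Prime := Nat.minFac_prime hN1
      have hqd : q ∣ N := Nat.minFac_dvd N
      have hq2 : q ≠ 2 := by
        intro h
        rw [h] at hqd
        obtain ⟨k, hk⟩ := hqd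
        omega
      have hqodd : q % 2 = 1 := Nat.odd_iff.mp (hqp.odd_of_ne_two hq2)
      have hq8 : q % 8 = 1 ∨ q % 8 = 3 ∨ q % 8 = 5 ∨ q % 8 = 7 := by omega
      have hq1 : 2 ≤ q := hqp.two_le
      have hcase35 : q % 8 = 3 ∨ q % 8 = 5 → N % 8 = 1 ∨ N % 8 = 7 := by
        intro h35
        have hev : Even (N.factorization q) := hall q hqp h35
        have hpos : 0 < N.factorization q :=
          (Nat.Prime.factorization_pos_of_dvd hqp hN0 hqd)
        have h2le : 2 ≤ N.factorization q := by
          obtain ⟨k, hk⟩ := hev; omega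
        have hsq : q ^ 2 ∣ N := (Nat.Prime.pow_dvd_iff_le_factorization hqp hN0).mpr h2le
        obtain ⟨M, hM⟩ := hsq
        have hM0 : M ≠ 0 := by rintro rfl; simp at hM; exact hN0 hM
        have hModd : M % 2 = 1 := by
          rcases Nat.even_or_odd M with ⟨k, hk⟩ | ho
          · exfalso
            have : N = 2 * (q ^ 2 * k) := by rw [hM, hk]; ring
            omega
          · exact Nat.odd_iff.mp ho
        have hq4 : 4 ≤ q ^ 2 := by nlinarith
        have hMlt : M < N := by
          have : 4 * M ≤ q ^ 2 * M := Nat.mul_le_mul_right M hq4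
          have hMpos : 0 < M := Nat.pos_of_ne_zero hM0
          omega
        have hfac : ∀ q' : ℕ, q'.Prime → q' % 8 = 3 ∨ q' % 8 = 5 →
            Even (M.factorization q') := by
          intro q' hq' h35'
          have hNfac : N.factorization q' = (q ^ 2).factorization q' + M.factorization q' := by
            rw [hM, Nat.factorization_mul (pow_ne_zero 2 hqp.ne_zero) hM0]
            simp
          have hq2fac : (q ^ 2).factorization q' = if q' = q then 2 else 0 := by
            rw [hqp.factorization_pow, Finsupp.single_apply]
            simp [eq_comm]
          have := hall q' hq' h35'
          rw [hNfac, hq2fac] at this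
          by_cases hqq : q' = q
          · rw [if_pos hqq] at this
            obtain ⟨k, hk⟩ := this
            exact ⟨k - 1, by omega⟩
          · rw [if_neg hqq] at this
            simpa using this
        have hM8 := ih M hMlt hModd hfac
        have hq2mod : q ^ 2 % 8 = 1 := by
          rw [Nat.pow_mod]
          rcases h35 with h | h <;> rw [h]
        rw [hM, Nat.mul_mod, hq2mod]
        omega
      have hcase17 : q % 8 = 1 ∨ q % 8 = 7 → N % 8 = 1 ∨ N % 8 = 7 := by
        intro h17
        obtain ⟨M, hM⟩ := hqd
        have hM0 : M ≠ 0 := by rintro rfl; simp at hM; exact hN0 hM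
        have hModd : M % 2 = 1 := by
          rcases Nat.even_or_odd M with ⟨k, hk⟩ | ho
          · exfalso
            have : N = 2 * (q * k) := by rw [hM, hk]; ring
            omega
          · exact Nat.odd_iff.mp ho
        have hMlt : M < N := by
          have : 2 * M ≤ q * M := Nat.mul_le_mul_right M hq1
          have hMpos : 0 < M := Nat.pos_of_ne_zero hM0
          omega
        have hfac : ∀ q' : ℕ, q'.Prime → q' % 8 = 3 ∨ q' % 8 = 5 →
            Even (M.factorization q') := by
          intro q' hq' h35'
          have hNfac : N.factorization q' = q.factorization q' + M.factorization q' := by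
            rw [hM, Nat.factorization_mul hqp.ne_zero hM0]
            simp
          have hqfac : q.factorization q' = 0 := by
            rw [hqp.factorization, Finsupp.single_apply]
            have : q' ≠ q := by
              intro hqq
              rw [hqq] at h35'
              omega
            simp [Ne.symm this]
          have := hall q' hq' h35'
          rw [hNfac, hqfac] at this
          simpa using this
        have hM8 := ih M hMlt hModd hfac
        rw [hM, Nat.mul_mod]
        rcases h17 with h | h <;> rw [h] <;> omega
      rcases hq8 with h | h | h | h
      · exact hcase17 (Or.inl h)
      · exact hcase35 (Or.inl h)
      · exact hcase35 (Or.inr h)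
      · exact hcase17 (Or.inr h)

private lemma exists_bad_prime' (n : ℤ) (h2 : n % 2 = 1) (h8 : n % 8 = 3 ∨ n % 8 = 5) :
    ∃ q : ℕ, q.Prime ∧ (q % 8 = 3 ∨ q % 8 = 5) ∧ Odd (n.natAbs.factorization q) := by
  by_contra h
  push_neg at h
  have hall : ∀ q : ℕ, q.Prime → q % 8 = 3 ∨ q % 8 = 5 → Even (n.natAbs.factorization q) := by
    intro q hq hm
    have := h q hq hm
    rwa [← Nat.not_even_iff_odd, not_not] at this
  have hNodd : n.natAbs % 2 = 1 := by
    rcases Int.natAbs_eq n with h' | h' <;> omega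
  have := mod8_of_even_mults' n.natAbs hNodd hall
  rcases Int.natAbs_eq n with h' | h' <;> omega

theorem stmt10 (m : ℤ) (hm : m % 8 = 3 ∨ m % 8 = 5) :
    (∀ (p : ℕ) [Fact p.Prime],
      ∃ x y z : ℤ_[p],
        x ^ 2 - 2 * y ^ 2 + 64 * z ^ 2 = (m : ℤ_[p]) ^ 2 ∧
          ¬ ((p : ℤ_[p]) ∣ x ∧ (p : ℤ_[p]) ∣ y ∧ (p : ℤ_[p]) ∣ z)) ∧
    ¬ ∃ x y z : ℤ, Int.gcd (Int.gcd x y : ℤ) z = 1 ∧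
        x ^ 2 - 2 * y ^ 2 + 64 * z ^ 2 = m ^ 2 := by
  constructor
  · intro p hpf
    by_cases hp2 : p = 2
    · subst hp2
      refine ⟨(m : ℤ_[2]), 0, 0, by ring, ?_⟩
      rintro ⟨h1, -⟩
      have hlt : ‖((m : ℤ) : ℤ_[2])‖ < 1 := (PadicInt.norm_lt_one_iff_dvd _).mpr h1
      have : (2 : ℤ) ∣ m := by
        have := (PadicInt.norm_int_lt_one_iff_dvd (p := 2) m).mp (by exact_mod_cast hlt)
        push_cast at this
        exact this
      omega
    · obtain ⟨x, y, z, heq, hx1⟩ := local_odd' m hp2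
      refine ⟨x, y, z, heq, ?_⟩
      rintro ⟨h1, -⟩
      have := (PadicInt.norm_lt_one_iff_dvd x).mpr h1
      rw [hx1] at this
      exact lt_irrefl _ this
  · rintro ⟨x, y, z, hg, heq⟩
    have hab : x ^ 2 - 2 * y ^ 2 = (m - 8 * z) * (m + 8 * z) := by linear_combination heq
    set a : ℤ := m - 8 * z with ha
    set b : ℤ := m + 8 * z with hb
    have ha2 : a % 2 = 1 := by omega
    have ha8 : a % 8 = 3 ∨ a % 8 = 5 := by omega
    obtain ⟨q, hqp, hq35, hqodd⟩ := exists_bad_prime' a ha2 ha8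
    have hq2ne : q ≠ 2 := by rcases hq35 with h | h <;> omega
    haveI : Fact q.Prime := ⟨hqp⟩
    have hnsq : ¬ IsSquare (2 : ZMod q) := by
      rw [ZMod.exists_sq_eq_two_iff hq2ne]
      omega
    have hqa : (q:ℤ) ∣ a := by
      have h0 : a.natAbs.factorization q ≠ 0 := by
        obtain ⟨k, hk⟩ := hqodd; omega
      have := Nat.dvd_of_factorization_pos h0
      rwa [Int.natCast_dvd]
    have hqZ : Prime (q : ℤ) := Nat.prime_iff_prime_int.mp hqp
    have hq2Z : ¬ ((q:ℤ) ∣ 2) := by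
      intro h
      have : q ∣ 2 := by rwa [Int.natCast_dvd] at h
      have := (Nat.prime_dvd_prime_iff_eq hqp Nat.prime_two).mp this
      exact hq2ne this
    have hqb : ¬ ((q:ℤ) ∣ b) := by
      intro hqbd
      have hqm : (q:ℤ) ∣ m := by
        have h2m : (q:ℤ) ∣ 2 * m := by
          have := dvd_add hqa hqbd
          rwa [show a + b = 2 * m by rw [ha, hb]; ring] at this
        rcases hqZ.dvd_mul.mp h2m with h | h
        · exact absurd h hq2Z
        · exact h
      have hqz : (q:ℤ) ∣ z := by
        have h16z : (q:ℤ) ∣ 16 * z := by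
          have := dvd_sub hqbd hqa
          rwa [show b - a = 16 * z by rw [ha, hb]; ring] at this
        have h16 : ¬ ((q:ℤ) ∣ 16) := by
          intro h
          have h4 : (q:ℤ) ∣ 2 ^ 4 := by rwa [show ((2:ℤ)) ^ 4 = 16 by norm_num]
          exact hq2Z (hqZ.dvd_of_dvd_pow h4)
        rcases hqZ.dvd_mul.mp h16z with h | h
        · exact absurd h h16
        · exact h
      have hqxy : (q:ℤ) ∣ x ^ 2 - 2 * y ^ 2 := by
        rw [hab]; exact hqa.mul_right b
      obtain ⟨hqx, hqy⟩ := dvd_both' hqp hnsq hqxy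
      have hgcd1 : (q:ℤ) ∣ (Int.gcd x y : ℤ) := Int.dvd_coe_gcd hqx hqy
      have hgcd2 : (q:ℤ) ∣ (Int.gcd (Int.gcd x y : ℤ) z : ℤ) := Int.dvd_coe_gcd hgcd1 hqz
      rw [hg] at hgcd2
      have := Int.le_of_dvd one_pos hgcd2
      have := hqp.two_le
      omega
    have ha0 : a ≠ 0 := by omega
    have hb0 : b ≠ 0 := by omega
    have hprod0 : x ^ 2 - 2 * y ^ 2 ≠ 0 := by
      rw [hab]; exact mul_ne_zero ha0 hb0
    have heven := even_mult' hqp hnsq (x ^ 2 - 2 * y ^ 2).natAbs x y rfl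
      (Int.natAbs_ne_zero.mpr hprod0)
    rw [hab, Int.natAbs_mul,
      Nat.factorization_mul (Int.natAbs_ne_zero.mpr ha0) (Int.natAbs_ne_zero.mpr hb0)] at heven
    have hbfac : b.natAbs.factorization q = 0 :=
      Nat.factorization_eq_zero_of_not_dvd (fun h => hqb (Int.natCast_dvd.mpr h))
    simp only [Finsupp.add_apply, hbfac, add_zero] at heven
    obtain ⟨k, hk⟩ := hqodd
    obtain ⟨j, hj⟩ := heven
    omega
end

section
/- Let m be an odd positive integer with m ≡ 1 (mod 3). Then: (1) for every prime p there exist x, y, z ∈ ℤ_p, not all divisible by p, with x² + xy + y² + 9z² = 4m²; but (2) there do not exist integers x, y, z with gcd(x, y, z) = 1 and x² + xy + y² + 9z² = 4m². -/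
lemma L1 (q : ℕ) (hq : q.Prime) (hq3 : q % 3 = 2) (x y : ℤ)
    (h : (q:ℤ) ∣ x^2 + x*y + y^2) : (q:ℤ) ∣ x ∧ (q:ℤ) ∣ y := by
  haveI : Fact q.Prime := ⟨hq⟩
  have h0 : ((x:ZMod q))^2 + (x:ZMod q)*(y:ZMod q) + (y:ZMod q)^2 = 0 := by
    have := (ZMod.intCast_zmod_eq_zero_iff_dvd (x^2+x*y+y^2) q).mpr h
    push_cast at this
    linear_combination this
  set a : ZMod q := (x : ZMod q) with ha
  set b : ZMod q := (y : ZMod q) with hb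
  have hb0 : b = 0 := by
    by_contra hbne
    set t : ZMod q := a * b⁻¹ with ht
    have hbinv : b * b⁻¹ = 1 := ZMod.mul_inv_of_unit b (Ne.isUnit hbne)
    have htt : t^2 + t + 1 = 0 := by
      linear_combination (b⁻¹)^2 * h0 - (a*b⁻¹ + b*b⁻¹ + 1) * hbinv
    have ht3 : t^3 = 1 := by linear_combination (t - 1) * htt
    have htne1 : t ≠ 1 := by
      intro h1
      rw [h1] at htt
      norm_num at htt
      have h3 : q ∣ 3 := (ZMod.natCast_eq_zero_iff 3 q).mp (by exact_mod_cast htt)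
      have := (Nat.prime_three).eq_one_or_self_of_dvd q h3
      omega
    haveI : Fact (Nat.Prime 3) := ⟨by norm_num⟩
    have hord : orderOf t = 3 := orderOf_eq_prime ht3 htne1
    have htne0 : t ≠ 0 := by
      intro h0'
      rw [h0'] at htt
      norm_num at htt
    have hpow : t ^ (q - 1) = 1 := ZMod.pow_card_sub_one_eq_one htne0
    have : (3 : ℕ) ∣ q - 1 := hord ▸ orderOf_dvd_of_pow_eq_one hpow
    have hq2 := hq.two_le
    omega
  have ha0 : a = 0 := by
    have : a^2 = 0 := by rw [hb0] at h0; linear_combination h0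
    exact pow_eq_zero_iff (by norm_num) |>.mp this
  exact ⟨(ZMod.intCast_zmod_eq_zero_iff_dvd x q).mp ha0,
    (ZMod.intCast_zmod_eq_zero_iff_dvd y q).mp hb0⟩
lemma L2 (q : ℕ) (hq : q.Prime) (hq3 : q % 3 = 2) :
    ∀ n : ℕ, ∀ x y : ℤ, (x^2 + x*y + y^2).natAbs = n → n ≠ 0 →
      Even (n.factorization q) := by
  intro n
  induction n using Nat.strong_induction_on with
  | _ n IH =>
    intro x y hn hn0
    by_cases hdvd : q ∣ n
    · have hdvdZ : (q:ℤ) ∣ x^2 + x*y + y^2 := by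
        rw [← Int.natAbs_dvd_natAbs, Int.natAbs_natCast, hn]; exact hdvd
      obtain ⟨hx, hy⟩ := L1 q hq hq3 x y hdvdZ
      obtain ⟨x', rfl⟩ := hx
      obtain ⟨y', rfl⟩ := hy
      have hfac : ((q:ℤ)*x')^2 + ((q:ℤ)*x')*((q:ℤ)*y') + ((q:ℤ)*y')^2
          = (q:ℤ)^2 * (x'^2 + x'*y' + y'^2) := by ring
      set n' : ℕ := (x'^2 + x'*y' + y'^2).natAbs with hn'
      have hnn : n = q^2 * n' := by
        rw [← hn, hfac, Int.natAbs_mul, Int.natAbs_pow, Int.natAbs_natCast]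
      have hn'0 : n' ≠ 0 := by
        intro h0; rw [hnn, h0, mul_zero] at hn0; exact hn0 rfl
      have hq1 : 1 < q := hq.one_lt
      have hn'pos : 0 < n' := Nat.pos_of_ne_zero hn'0
      have hq2 : 2 ≤ q := hq1
      have h4 : 4 ≤ q^2 := by nlinarith
      have hlt : n' < n := by
        have := Nat.mul_le_mul_right n' h4
        omega
      have hIH := IH n' hlt x' y' rfl hn'0
      rw [hnn, Nat.factorization_mul (by positivity) hn'0]
      simp only [Finsupp.coe_add, Pi.add_apply, hq.factorization_pow,
        Finsupp.smul_single, Finsupp.single_eq_same]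
      exact (even_two).add hIH
    · rw [Nat.factorization_eq_zero_of_not_dvd hdvd]
      exact Even.zero

lemma L3 : ∀ n : ℕ, 0 < n →
    (∀ q, q.Prime → q % 3 = 2 → Even (n.factorization q)) → n % 3 ≠ 2 := by
  intro n
  induction n using Nat.strong_induction_on with
  | _ n IH =>
    intro hn0 hev
    by_cases hex : ∃ q, q.Prime ∧ q % 3 = 2 ∧ q ∣ n
    · obtain ⟨q, hq, hq3, hqd⟩ := hex
      have hv1 : 1 ≤ n.factorization q :=
        (Nat.Prime.pow_dvd_iff_le_factorization hq hn0.ne').mp (by simpa using hqd)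
      obtain ⟨c, hc⟩ := hev q hq hq3
      have hv2 : 2 ≤ n.factorization q := by omega
      have hq2d : q^2 ∣ n := (Nat.Prime.pow_dvd_iff_le_factorization hq hn0.ne').mpr hv2
      obtain ⟨n', rfl⟩ := hq2d
      have hq1 : 1 < q := hq.one_lt
      have hn'0 : 0 < n' := by
        rcases Nat.eq_zero_or_pos n' with h | h
        · rw [h, mul_zero] at hn0; omega
        · exact h
      have hq2 : 2 ≤ q := hq1
      have h4 : 4 ≤ q^2 := by nlinarith
      have hlt : n' < q^2 * n' := by
        have := Nat.mul_le_mul_right n' h4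
        omega
      have hev' : ∀ r, r.Prime → r % 3 = 2 → Even (n'.factorization r) := by
        intro r hr hr3
        have hmul := Nat.factorization_mul (a := q^2) (b := n') (by positivity) hn'0.ne'
        have happ : (q^2*n').factorization r = (q^2).factorization r + n'.factorization r := by
          rw [hmul]; simp
        by_cases hrq : r = q
        · subst hrq
          obtain ⟨c', hc'⟩ := hev r hr hr3
          have h2 : (r^2).factorization r = 2 := by
            simp [hr.factorization_pow]
          rw [happ, h2] at hc'
          exact ⟨c' - 1, by omega⟩
        · have hz := hev r hr hr3
          have h0 : (q^2).factorization r = 0 := by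
            simp [hq.factorization_pow, Finsupp.single_apply, Ne.symm hrq]
          rw [happ, h0, zero_add] at hz
          exact hz
      have hn'3 := IH n' hlt hn'0 hev'
      have hqm : q^2 % 3 = 1 := by
        rw [Nat.pow_mod, hq3]
      rw [Nat.mul_mod, hqm]
      omega
    · intro hn3
      have hne1 : n ≠ 1 := by omega
      obtain ⟨p, hp, hpd⟩ := Nat.exists_prime_and_dvd hne1
      have hp3 : p % 3 ≠ 2 := fun h => hex ⟨p, hp, h, hpd⟩
      obtain ⟨n', rfl⟩ := hpd
      have hn'0 : 0 < n' := by
        rcases Nat.eq_zero_or_pos n' with h | h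
        · rw [h, mul_zero] at hn0; omega
        · exact h
      have hlt : n' < p * n' := by
        have := Nat.mul_le_mul_right n' hp.two_le
        omega
      have hev' : ∀ r, r.Prime → r % 3 = 2 → Even (n'.factorization r) := by
        intro r hr hr3
        have : ¬ r ∣ n' := fun hd => hex ⟨r, hr, hr3, hd.mul_left p⟩
        rw [Nat.factorization_eq_zero_of_not_dvd this]
        exact Even.zero
      have hn'3 := IH n' hlt hn'0 hev'
      rw [Nat.mul_mod] at hn3
      have hpm := Nat.mod_lt p (show 0 < 3 by norm_num)
      -- p % 3 ∈ {0,1}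
      interval_cases h : p % 3 <;> omega
lemma part2' (m : ℤ) (hm_pos : 0 < m) (hm_odd : m % 2 = 1) (hm3 : m % 3 = 1) :
    ¬ ∃ x y z : ℤ, Int.gcd (Int.gcd x y : ℤ) z = 1 ∧
        x ^ 2 + x * y + y ^ 2 + 9 * z ^ 2 = 4 * m ^ 2 := by
  rintro ⟨x, y, z, hg, heq⟩
  set N : ℤ := x^2 + x*y + y^2 with hN
  set A : ℤ := 2*m - 3*z with hA
  set B : ℤ := 2*m + 3*z with hB
  have hNAB : N = A * B := by rw [hN, hA, hB]; linear_combination heq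
  have hNnonneg : 0 ≤ N := by rw [hN]; nlinarith [sq_nonneg (2*x+y), sq_nonneg y]
  have hNne : N ≠ 0 := by
    intro h0
    have hy2 : y^2 ≤ 0 := by nlinarith [sq_nonneg (2*x+y)]
    have hy : y = 0 := by nlinarith [sq_nonneg y]
    have hx : x = 0 := by nlinarith [sq_nonneg x]
    rw [hx, hy] at hg
    simp [Int.gcd] at hg
    have hz2 : z^2 = 1 := by
      rcases Int.natAbs_eq z with h | h <;> rw [h, hg] <;> ring
    have h := heq
    rw [hN, hx, hy] at h
    have h9 : (9:ℤ) = 4*m^2 := by linear_combination h - 9*hz2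
    have h4 : (4:ℤ) ∣ 9 := ⟨m^2, by linarith⟩
    norm_num at h4
  have hNpos : 0 < N := lt_of_le_of_ne hNnonneg (Ne.symm hNne)
  have h9z : 9*z^2 < 4*m^2 := by rw [hN] at hNpos; nlinarith
  have hApos : 0 < A := by rw [hA]; nlinarith
  have hBpos : 0 < B := by rw [hB]; nlinarith
  have hA3 : A % 3 = 2 := by omega
  have hAn3 : A.natAbs % 3 = 2 := by omega
  have hAnpos : 0 < A.natAbs := by omega
  have hBn0 : B.natAbs ≠ 0 := by omega
  have hNn0 : N.natAbs ≠ 0 := by omega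
  refine L3 A.natAbs hAnpos ?_ hAn3
  intro q hq hq3
  by_cases hqA : (q:ℤ) ∣ A
  · by_cases hqB : (q:ℤ) ∣ B
    · exfalso
      have hqN : (q:ℤ) ∣ N := hNAB ▸ hqA.mul_right B
      obtain ⟨hqx, hqy⟩ := L1 q hq hq3 x y (hN ▸ hqN)
      have hqz : (q:ℤ) ∣ z := by
        by_cases hq2 : q = 2
        · subst hq2
          rw [hA] at hqA
          omega
        · have h6z : (q:ℤ) ∣ 6*z := by
            have := dvd_sub hqB hqA
            rw [hA, hB] at this
            convert this using 1
            · rfl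
            · ring
          have hqprime : Prime (q:ℤ) := Nat.prime_iff_prime_int.mp hq
          rcases hqprime.dvd_mul.mp h6z with h6 | hz
          · exfalso
            have hq6 : q ∣ 6 := by exact_mod_cast h6
            have hle : q ≤ 6 := Nat.le_of_dvd (by norm_num) hq6
            have h2le := hq.two_le
            interval_cases q <;> omega
          · exact hz
      have hd1 : (q:ℤ) ∣ (Int.gcd x y : ℤ) := Int.dvd_coe_gcd hqx hqy
      have hd2 : (q:ℤ) ∣ (Int.gcd (Int.gcd x y : ℤ) z : ℤ) := Int.dvd_coe_gcd hd1 hqz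
      rw [hg] at hd2
      have := Int.le_of_dvd one_pos hd2
      have := hq.two_le
      omega
    · have hNn : N.natAbs = A.natAbs * B.natAbs := by rw [hNAB, Int.natAbs_mul]
      have hEvenN : Even (N.natAbs.factorization q) := L2 q hq hq3 N.natAbs x y (by rw [hN]) hNn0
      have hmul := Nat.factorization_mul (a := A.natAbs) (b := B.natAbs) (by omega) hBn0
      have hBzero : B.natAbs.factorization q = 0 := by
        apply Nat.factorization_eq_zero_of_not_dvd
        intro hd
        apply hqB
        have : (q:ℤ) ∣ (B.natAbs:ℤ) := Int.natCast_dvd_natCast.mpr hd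
        rwa [Int.natAbs_of_nonneg hBpos.le] at this
      rw [hNn, hmul] at hEvenN
      simpa [hBzero] using hEvenN
  · have : ¬ q ∣ A.natAbs := by
      intro hd
      apply hqA
      have : (q:ℤ) ∣ (A.natAbs:ℤ) := Int.natCast_dvd_natCast.mpr hd
      rwa [Int.natAbs_of_nonneg hApos.le] at this
    rw [Nat.factorization_eq_zero_of_not_dvd this]
    exact Even.zero
open Polynomial in
lemma quadRoot (p : ℕ) [hp : Fact p.Prime] (b c y₀ : ℤ_[p])
    (h1 : (p:ℤ_[p]) ∣ (y₀^2 + b*y₀ + c)) (h2 : ‖2*y₀ + b‖ = 1) :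
    ∃ y : ℤ_[p], y^2 + b*y + c = 0 ∧ (p:ℤ_[p]) ∣ (y - y₀) := by
  set F : Polynomial ℤ_[p] := X^2 + C b * X + C c with hF
  have hFeval : ∀ t, F.eval t = t^2 + b*t + c := by
    intro t; simp [hF]
  have hFder : ∀ t, F.derivative.eval t = 2*t + b := by
    intro t; simp [hF]; norm_num
  have hnorm : ‖F.eval y₀‖ < ‖F.derivative.eval y₀‖^2 := by
    rw [hFeval, hFder, h2]
    norm_num
    exact (PadicInt.norm_lt_one_iff_dvd _).mpr h1
  obtain ⟨y, hy, hdist, -, -⟩ := hensels_lemma hnorm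
  refine ⟨y, by rw [← hFeval]; exact hy, ?_⟩
  rw [Polynomial.coe_aeval_eq_eval, hFder, h2] at hdist
  exact (PadicInt.norm_lt_one_iff_dvd _).mp hdist

lemma pdvd_iff (p : ℕ) [hp : Fact p.Prime] (t : ℤ_[p]) :
    (p:ℤ_[p]) ∣ t ↔ PadicInt.toZMod t = 0 := by
  rw [← RingHom.mem_ker, PadicInt.ker_toZMod, PadicInt.maximalIdeal_eq_span_p,
    Ideal.mem_span_singleton]

lemma part1 (m : ℤ) (hm_odd : m % 2 = 1) (hm3 : m % 3 = 1)
    (p : ℕ) [hp : Fact p.Prime] :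
    ∃ x y z : ℤ_[p],
      x ^ 2 + x * y + y ^ 2 + 9 * z ^ 2 = 4 * (m : ℤ_[p]) ^ 2 ∧
        ¬ ((p : ℤ_[p]) ∣ x ∧ (p : ℤ_[p]) ∣ y ∧ (p : ℤ_[p]) ∣ z) := by
  by_cases hp2 : p = 2
  · subst hp2
    obtain ⟨y, hy, -⟩ := quadRoot 2 1 (((10 - 4*m^2 : ℤ) : ℤ_[2])) 0
      (by
        have hd : (2:ℤ) ∣ (10 - 4*m^2) := by omega
        have : ((2:ℤ) : ℤ_[2]) ∣ (((10 - 4*m^2 : ℤ)) : ℤ_[2]) :=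
          map_dvd (Int.castRingHom ℤ_[2]) hd
        simpa using this)
      (by simp)
    refine ⟨1, y, 1, ?_, ?_⟩
    · have hc : (((10 - 4*m^2 : ℤ)) : ℤ_[2]) = 10 - 4*(m:ℤ_[2])^2 := by push_cast; ring
      rw [hc] at hy
      linear_combination hy
    · rintro ⟨h, -, -⟩
      have := (PadicInt.norm_lt_one_iff_dvd _).mpr h
      simp at this
  · by_cases hpm : (p:ℤ) ∣ m
    · -- p odd, p ∣ m, p ≠ 3
      have hp3 : p ≠ 3 := by rintro rfl; omega
      have hprime := hp.out
      have h3ne : (3 : ZMod p) ≠ 0 := by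
        intro h
        have : p ∣ 3 := by
          have := (ZMod.natCast_eq_zero_iff 3 p).mp (by exact_mod_cast h)
          exact this
        rcases (Nat.prime_three).eq_one_or_self_of_dvd p this with h | h <;>
          simp_all [Nat.Prime]
      have h9ne : (9 : ZMod p) ≠ 0 := by
        intro h
        have h' : (3 : ZMod p) * 3 = 0 := by norm_num; exact_mod_cast h
        rcases mul_eq_zero.mp h' with h | h <;> exact h3ne h
      have hcard : Fintype.card (ZMod p) % 2 = 1 := by
        rw [ZMod.card]
        exact Nat.odd_iff.mp (hprime.odd_of_ne_two hp2)
      obtain ⟨a, w, hsol⟩ := FiniteField.exists_root_sum_quadratic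
        (f := Polynomial.C (3:ZMod p) * Polynomial.X^2 + Polynomial.C 0 * Polynomial.X
          + Polynomial.C 1)
        (g := Polynomial.C (9:ZMod p) * Polynomial.X^2 + Polynomial.C 0 * Polynomial.X
          + Polynomial.C 0)
        (Polynomial.degree_quadratic h3ne) (Polynomial.degree_quadratic h9ne) hcard
      simp only [Polynomial.eval_add, Polynomial.eval_mul, Polynomial.eval_pow,
        Polynomial.eval_C, Polynomial.eval_X] at hsol
      set xa : ℤ_[p] := ((a.val : ℕ) : ℤ_[p]) with hxa
      set zw : ℤ_[p] := ((w.val : ℕ) : ℤ_[p]) with hzw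
      have hφa : PadicInt.toZMod xa = a := by
        rw [hxa, map_natCast, ZMod.natCast_val, ZMod.cast_id]
      have hφw : PadicInt.toZMod zw = w := by
        rw [hzw, map_natCast, ZMod.natCast_val, ZMod.cast_id]
      have hφm : PadicInt.toZMod ((m : ℤ_[p])) = 0 := by
        rw [map_intCast]
        exact (ZMod.intCast_zmod_eq_zero_iff_dvd m p).mpr hpm
      have h2ndvd : ¬ (p:ℕ) ∣ 2 := by
        intro h
        have := Nat.le_of_dvd (by norm_num) h
        have := hprime.two_le
        omega
      have h1 : (p:ℤ_[p]) ∣ ((1 - xa)^2 + (2*xa)*(1 - xa)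
          + ((2*xa)^2 + 9*zw^2 - 4*(m:ℤ_[p])^2)) := by
        rw [pdvd_iff]
        simp only [map_add, map_sub, map_mul, map_pow, map_one, map_ofNat, hφa, hφw, hφm]
        linear_combination hsol
      have h2 : ‖2*(1 - xa) + 2*xa‖ = 1 := by
        have he : 2*(1 - xa) + 2*xa = ((2:ℤ) : ℤ_[p]) := by push_cast; ring
        rw [he]
        by_contra hne
        have hlt : ‖((2:ℤ) : ℤ_[p])‖ < 1 :=
          lt_of_le_of_ne (PadicInt.norm_le_one _) hne
        have := (PadicInt.norm_int_lt_one_iff_dvd 2).mp hlt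
        exact h2ndvd (by exact_mod_cast this)
      obtain ⟨y, hy, hyy0⟩ := quadRoot p (2*xa)
        ((2*xa)^2 + 9*zw^2 - 4*(m:ℤ_[p])^2) (1 - xa) h1 h2
      refine ⟨2*xa, y, zw, by linear_combination hy, ?_⟩
      rintro ⟨hdx, hdy, -⟩
      rw [pdvd_iff] at hdx hdy
      rw [pdvd_iff] at hyy0
      rw [map_sub] at hyy0
      have hy0 : PadicInt.toZMod (1 - xa) = 0 := by
        rw [← sub_eq_zero.mp hyy0]
        exact hdy
      rw [map_sub, map_one, hφa] at hy0
      have ha1 : a = 1 := by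
        have := sub_eq_zero.mp hy0
        exact this.symm
      rw [map_mul, hφa, ha1, mul_one] at hdx
      have h2z : (2 : ZMod p) = 0 := by rw [← hdx]; exact (map_ofNat PadicInt.toZMod 2).symm
      have : (p:ℕ) ∣ 2 := by
        have := (ZMod.natCast_eq_zero_iff 2 p).mp (by exact_mod_cast h2z)
        exact this
      exact h2ndvd this
    · refine ⟨((2*m : ℤ) : ℤ_[p]), 0, 0, ?_, ?_⟩
      · push_cast
        ring
      · rintro ⟨h, -, -⟩
        have h' : (p:ℤ) ∣ 2*m := by
          rw [← PadicInt.norm_int_lt_one_iff_dvd]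
          exact (PadicInt.norm_lt_one_iff_dvd _).mpr h
        have hprime : Prime (p:ℤ) := Nat.prime_iff_prime_int.mp hp.out
        rcases hprime.dvd_mul.mp h' with h2 | hm
        · have : p ∣ 2 := by exact_mod_cast h2
          have h2le := hp.out.two_le
          have hle : p ≤ 2 := Nat.le_of_dvd (by norm_num) this
          omega
        · exact hpm hm

theorem stmt11 (m : ℤ) (hm_pos : 0 < m) (hm_odd : m % 2 = 1) (hm3 : m % 3 = 1) :
    (∀ (p : ℕ) [Fact p.Prime],
      ∃ x y z : ℤ_[p],
        x ^ 2 + x * y + y ^ 2 + 9 * z ^ 2 = 4 * (m : ℤ_[p]) ^ 2 ∧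
          ¬ ((p : ℤ_[p]) ∣ x ∧ (p : ℤ_[p]) ∣ y ∧ (p : ℤ_[p]) ∣ z)) ∧
    ¬ ∃ x y z : ℤ, Int.gcd (Int.gcd x y : ℤ) z = 1 ∧
        x ^ 2 + x * y + y ^ 2 + 9 * z ^ 2 = 4 * m ^ 2 :=
  ⟨fun p _ => part1 m hm_odd hm3 p, part2' m hm_pos hm_odd hm3⟩
end

section
/- Consider the binary quadratic form g(x, y) = x² + 32y² and the ternary quadratic form h(x, y, z) = x² + 128y² + 128yz + 544z². Then: (1) for every prime p, g is represented by h over ℤ_p, i.e. there exist linear forms l₁, l₂, l₃ in x, y with coefficients in ℤ_p such that x² + 32y² = h(l₁(x,y), l₂(x,y), l₃(x,y)) holds identically; but (2) g is not represented by h over ℤ: no such linear forms with integer coefficients exist. -/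
set_option maxHeartbeats 1000000

/-- The binary form `x² + 32y²` is represented over `R` by the ternary form
`h(X,Y,Z) = X² + 128Y² + 128YZ + 544Z²`: there are linear forms
`lᵢ(x,y) = aᵢx + bᵢy` with coefficients in `R` such that
`x² + 32y² = h(l₁(x,y), l₂(x,y), l₃(x,y))` identically. -/
def RepsBinaryByH (R : Type*) [CommRing R] : Prop :=
  ∃ a₁ b₁ a₂ b₂ a₃ b₃ : R, ∀ x y : R,
    x ^ 2 + 32 * y ^ 2 =
      (a₁ * x + b₁ * y) ^ 2 + 128 * (a₂ * x + b₂ * y) ^ 2 +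
        128 * (a₂ * x + b₂ * y) * (a₃ * x + b₃ * y) + 544 * (a₃ * x + b₃ * y) ^ 2

theorem stmt14 :
    (∀ (p : ℕ) [Fact p.Prime], RepsBinaryByH ℤ_[p]) ∧ ¬ RepsBinaryByH ℤ := by
  constructor
  · intro p hp
    by_cases hp2 : p = 2
    · subst hp2
      -- use Hensel's lemma to find z with z² = -15 in ℤ₂
      have h2norm : ‖(2 : ℤ_[2])‖ = 2⁻¹ := by
        have := PadicInt.norm_p (p := 2)
        simpa using this
      have he : (Polynomial.X ^ 2 + Polynomial.C 15 : Polynomial ℤ_[2]).eval 1 = 2 ^ 4 := by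
        simp; norm_num
      have hd : (Polynomial.derivative (Polynomial.X ^ 2 + Polynomial.C 15 :
          Polynomial ℤ_[2])).eval 1 = 2 := by
        simp; norm_num
      have hnorm : ‖(Polynomial.X ^ 2 + Polynomial.C 15 : Polynomial ℤ_[2]).eval 1‖ <
          ‖(Polynomial.derivative (Polynomial.X ^ 2 + Polynomial.C 15 :
            Polynomial ℤ_[2])).eval 1‖ ^ 2 := by
        rw [he, hd, norm_pow, h2norm]
        norm_num
      obtain ⟨z, hz, hdist, -, -⟩ := hensels_lemma hnorm
      have hz2 : z ^ 2 = -15 := by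
        simp only [Polynomial.coe_aeval_eq_eval, Polynomial.eval_add, Polynomial.eval_pow, Polynomial.eval_X,
          Polynomial.eval_C] at hz
        linear_combination hz
      have hodd : ((2 : ℕ) : ℤ_[2]) ∣ (z - 1) := by
        rw [← PadicInt.norm_lt_one_iff_dvd]
        calc ‖z - 1‖ < _ := hdist
          _ ≤ 1 := PadicInt.norm_le_one _
      obtain ⟨w, hw⟩ := hodd
      refine ⟨1, 0, 0, w, 0, 1, fun x y => ?_⟩
      have hzw : z = 2 * w + 1 := by
        push_cast at hw
        linear_combination hw
      linear_combination (-32 * y ^ 2) * hz2 + (32 * y ^ 2 * (z + 2 * w + 1)) * hzw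
    · -- p odd: 2 is a unit
      have h2 : IsUnit (2 : ℤ_[p]) := by
        rw [PadicInt.isUnit_iff]
        have hle := PadicInt.norm_le_one (2 : ℤ_[p])
        rcases lt_or_eq_of_le hle with hlt | heq
        · exfalso
          have hcast : ((2 : ℤ) : ℤ_[p]) = (2 : ℤ_[p]) := by push_cast; ring
          rw [← hcast, PadicInt.norm_int_lt_one_iff_dvd] at hlt
          have hdvd : p ∣ 2 := by exact_mod_cast hlt
          exact hp2 ((Nat.prime_dvd_prime_iff_eq hp.out Nat.prime_two).mp hdvd)
        · exact heq
      obtain ⟨u, hu⟩ := isUnit_iff_exists.mp h2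
      refine ⟨1, 0, 0, u, 0, 0, fun x y => ?_⟩
      linear_combination (-(32 * y ^ 2 * (1 + 2 * u))) * hu.1
  · rintro ⟨a₁, b₁, a₂, b₂, a₃, b₃, h⟩
    have h10 := h 1 0
    have h01 := h 0 1
    have h11 := h 1 1
    have h1m := h 1 (-1)
    -- from h10: a₂ = a₃ = 0 and a₁² = 1
    have hS : (2 * a₂ + a₃) ^ 2 + 16 * a₃ ^ 2 ≤ 0 := by nlinarith [sq_nonneg a₁]
    have ha₃ : a₃ = 0 := by nlinarith [sq_nonneg (2 * a₂ + a₃), sq_nonneg a₃]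
    have ha₂ : a₂ = 0 := by nlinarith [sq_nonneg (2 * a₂ + a₃), sq_nonneg a₃]
    have ha₁ : a₁ ^ 2 = 1 := by nlinarith
    subst ha₂; subst ha₃
    -- cross term: a₁ * b₁ = 0, hence b₁ = 0
    have hc4 : 4 * (a₁ * b₁) = 0 := by linear_combination h1m - h11
    have hcross : a₁ * b₁ = 0 := by linarith
    have hb₁ : b₁ = 0 := by
      have hba : b₁ * a₁ ^ 2 = 0 := by
        calc b₁ * a₁ ^ 2 = a₁ * (a₁ * b₁) := by ring
          _ = 0 := by rw [hcross, mul_zero]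
      rw [ha₁] at hba; linarith
    subst hb₁
    -- from h01: (2b₂+b₃)² + 16 b₃² = 1
    have hB32 : 32 * ((2 * b₂ + b₃) ^ 2 + 16 * b₃ ^ 2) = 32 := by linear_combination -h01
    have hB : (2 * b₂ + b₃) ^ 2 + 16 * b₃ ^ 2 = 1 := by linarith
    have hb₃sq : b₃ ^ 2 ≤ 0 := by nlinarith [sq_nonneg (2 * b₂ + b₃)]
    have hb₃ : b₃ = 0 := by nlinarith [sq_nonneg b₃]
    have : (4 : ℤ) ∣ 1 := ⟨b₂ ^ 2, by nlinarith⟩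
    norm_num at this
end

section
/- Let d be a negative squarefree integer and K = ℚ(√d), with ring of integers O_K. Let a ∈ O_K be nonzero. Then there exist a squarefree integer d₀ and an element α ∈ K with a = d₀·α² if and only if the norm N_{K/ℚ}(a) is the square of an integer. -/
open scoped NumberField

private theorem cayley2 (M : Matrix (Fin 2) (Fin 2) ℚ) :
    M * M - M.trace • M + M.det • 1 = 0 := by
  ext i j
  fin_cases i <;> fin_cases j <;>
    simp [Matrix.mul_apply, Matrix.trace_fin_two, Matrix.det_fin_two, Fin.sum_univ_two,
      Matrix.one_apply] <;> ring

private theorem rat_sqfree_decomp (q : ℚ) (hq : q ≠ 0) :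
    ∃ (d₀ : ℤ) (m : ℚ), Squarefree d₀ ∧ q = (d₀ : ℚ) * m ^ 2 := by
  obtain ⟨num, den, hden, hqeq⟩ : ∃ (num : ℤ) (den : ℕ), (den:ℚ) ≠ 0 ∧ q = num / den :=
    ⟨q.num, q.den, Nat.cast_ne_zero.2 q.den_nz, (Rat.num_div_den q).symm⟩
  set n : ℤ := num * den with hn
  obtain ⟨A, B, hAB, hA⟩ := Nat.sq_mul_squarefree n.natAbs
  have hq' : q = (n : ℚ) / (den : ℚ) ^ 2 := by
    rw [hqeq, hn]; push_cast; field_simp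
  rcases Int.natAbs_eq n with h | h
  · refine ⟨(A : ℤ), (B : ℚ) / den, Int.squarefree_natCast.2 hA, ?_⟩
    rw [hq', h, ← hAB, div_pow, ← mul_div_assoc]
    congr 1
    push_cast; ring
  · refine ⟨-(A : ℤ), (B : ℚ) / den, ?_, ?_⟩
    · rw [← Int.squarefree_natAbs]; simpa using hA
    · rw [hq', h, ← hAB, div_pow, ← mul_div_assoc]
      congr 1
      push_cast; ring

private theorem quad_rel (K : Type*) [Field K] [NumberField K]
    (hdeg : Module.finrank ℚ K = 2) (z : K) :
    z ^ 2 + ((Algebra.norm ℚ z : ℚ) : K) = ((Algebra.trace ℚ K z : ℚ) : K) * z := by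
  let b : Module.Basis (Fin 2) ℚ K := Module.finBasisOfFinrankEq ℚ K hdeg
  have h0 : Algebra.leftMulMatrix b
      (z ^ 2 - (Algebra.trace ℚ K z) • z + (Algebra.norm ℚ z) • 1) =
      Algebra.leftMulMatrix b 0 := by
    rw [map_zero, map_add, map_sub, map_pow, map_smul, map_smul, map_one,
      Algebra.trace_eq_matrix_trace b z, Algebra.norm_eq_matrix_det b z]
    simpa [pow_two] using cayley2 (Algebra.leftMulMatrix b z)
  have h1 := Algebra.leftMulMatrix_injective b h0
  have hs : ∀ c : ℚ, ∀ x : K, c • x = (c : K) * x := fun c x => by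
    rw [Algebra.smul_def, eq_ratCast (algebraMap ℚ K)]
  rw [hs, hs, mul_one] at h1
  linear_combination h1

theorem stmt17 (d : ℤ) (hd : d < 0) (hsf : Squarefree d)
    (K : Type*) [Field K] [NumberField K] (hdeg : Module.finrank ℚ K = 2)
    (s : K) (hs : s ^ 2 = (d : K))
    (a : 𝓞 K) (ha : a ≠ 0) :
    (∃ (d₀ : ℤ) (α : K), Squarefree d₀ ∧ (a : K) = (d₀ : K) * α ^ 2) ↔
      ∃ r : ℤ, Algebra.norm ℤ a = r ^ 2 := by
  have haK : (a : K) ≠ 0 := by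
    intro h
    exact ha (NumberField.RingOfIntegers.coe_eq_zero_iff.1 h)
  constructor
  · rintro ⟨d₀, α, hsf₀, hq⟩
    have hcast : ((d₀ : ℤ) : K) = algebraMap ℚ K (d₀ : ℚ) := by
      rw [eq_ratCast (algebraMap ℚ K)]; push_cast; rfl
    have hnorm : ((Algebra.norm ℤ a : ℤ) : ℚ) = ((d₀ : ℚ) * Algebra.norm ℚ α) ^ 2 := by
      rw [Algebra.coe_norm_int, hq, map_mul, map_pow, hcast, Algebra.norm_algebraMap, hdeg]
      ring
    set q : ℚ := (d₀ : ℚ) * Algebra.norm ℚ α with hqdef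
    have hint : IsIntegral ℤ q := by
      refine ⟨Polynomial.X ^ 2 - Polynomial.C (Algebra.norm ℤ a), ?_, ?_⟩
      · apply Polynomial.monic_X_pow_sub_C _ (by norm_num)
      · rw [Polynomial.eval₂_sub, Polynomial.eval₂_pow, Polynomial.eval₂_X, Polynomial.eval₂_C,
          eq_intCast (algebraMap ℤ ℚ), ← hnorm]
        ring
    obtain ⟨r, hr⟩ := IsIntegrallyClosed.isIntegral_iff.1 hint
    have hr' : (r : ℚ) = q := by rw [← hr]; exact (eq_intCast _ r).symm
    refine ⟨r, ?_⟩
    have h3 : ((Algebra.norm ℤ a : ℤ) : ℚ) = ((r ^ 2 : ℤ) : ℚ) := by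
      rw [hnorm, ← hr']; push_cast; ring
    exact_mod_cast h3
  · rintro ⟨r, hr⟩
    have hr0 : r ≠ 0 := by
      rintro rfl
      rw [pow_two, mul_zero] at hr
      have hN : Algebra.norm ℚ (a : K) = 0 := by
        rw [← Algebra.coe_norm_int, hr]; norm_num
      exact Algebra.norm_ne_zero_iff.2 haK hN
    set t : ℚ := Algebra.trace ℚ K (a : K) with ht
    have hn : Algebra.norm ℚ (a : K) = ((r : ℚ)) ^ 2 := by
      rw [← Algebra.coe_norm_int, hr]; push_cast; ring
    -- choose sign ε = ±r with t + 2ε ≠ 0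
    obtain ⟨ε, hε2, hqne⟩ : ∃ ε : ℚ, ε ^ 2 = (r : ℚ) ^ 2 ∧ t + 2 * ε ≠ 0 := by
      by_cases h : t + 2 * (r : ℚ) ≠ 0
      · exact ⟨(r : ℚ), rfl, h⟩
      · push_neg at h
        refine ⟨-(r : ℚ), by ring, ?_⟩
        have : (r : ℚ) ≠ 0 := Int.cast_ne_zero.2 hr0
        intro h2
        apply this
        linarith [h, h2]
    obtain ⟨d₀, m, hd₀, hqm⟩ := rat_sqfree_decomp (t + 2 * ε) hqne
    have hm0 : m ≠ 0 := by
      rintro rfl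
      simp at hqm
      exact hqne hqm
    have hd₀0 : (d₀ : ℚ) ≠ 0 := Int.cast_ne_zero.2 hd₀.ne_zero
    -- move to K
    set A : K := (a : K)
    set T : K := ((t : ℚ) : K)
    set E : K := ((ε : ℚ) : K)
    set M : K := ((m : ℚ) : K)
    set D : K := ((d₀ : ℚ) : K)
    have hMK : M ≠ 0 := by simpa [M] using hm0
    have hDK : D ≠ 0 := by simpa [D] using hd₀0
    have hrel : A ^ 2 + E ^ 2 = T * A := by
      have := quad_rel K hdeg (a : K)
      rw [hn, ← ht] at this
      have hE : ((((r : ℚ)) ^ 2 : ℚ) : K) = E ^ 2 := by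
        rw [← hε2]; push_cast; ring
      rw [hE] at this
      exact this
    have hQ : D * M ^ 2 = T + 2 * E := by
      have h4 := congrArg (fun x : ℚ => (x : K)) hqm
      simp only [Rat.cast_add, Rat.cast_mul, Rat.cast_ofNat, Rat.cast_pow] at h4
      exact h4.symm
    refine ⟨d₀, M / 2 + (A - T / 2) / (D * M), hd₀, ?_⟩
    have hDcast : ((d₀ : ℤ) : K) = D := by simp [D]
    rw [hDcast]
    have h1 : M / 2 + (A - T / 2) / (D * M) = (D * M ^ 2 + 2 * A - T) / (2 * (D * M)) := by
      field_simp
      ring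
    have h2 : (D * M ^ 2 + 2 * A - T) ^ 2 = 4 * (D * M ^ 2) * A := by
      linear_combination 4 * hrel + (D * M ^ 2 - T + 2 * E) * hQ
    rw [h1, div_pow, h2]
    field_simp
    ring
end
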